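/- arXiv:1612.00238 — 3 statements merged into one kernel-verified Lean document; each statement's English description precedes it below -/
import Mathlib

section
/- For α ∈ (0,1), m ∈ (-1,1), and r = (1+m)/(1-m), the arcsine Lamperti density f_1(x) = (2 sin(πα)/π) · (1-x)^{α-1}(1+x)^{α-1} / ( r(1-x)^{2α} + 2cos(πα)(1+x)^α(1-x)^α + r^{-1}(1+x)^{2α} ) satisfies ∫_{-1}^{1} f_1(x) dx = 1. -/
open Real Set MeasureTheory

/-- The arcsine Lamperti density with index α and mean drift m, where
`r = (1+m)/(1-m)`. -/
noncomputable def arcsineLamperti (α m : ℝ) (x : ℝ) : ℝ :=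
  (2 * Real.sin (Real.pi * α) / Real.pi) *
      ((1 - x) ^ (α - 1) * (1 + x) ^ (α - 1)) /
    (((1 + m) / (1 - m)) * (1 - x) ^ (2 * α)
      + 2 * Real.cos (Real.pi * α) * (1 + x) ^ α * (1 - x) ^ α
      + ((1 + m) / (1 - m))⁻¹ * (1 + x) ^ (2 * α))

private lemma lamperti_algebra (α c s r x dp dq Nx dN Qx dQ t denom : ℝ)
    (h0 : 0 < α) (hr : 0 < r)
    (hs : 0 < s) (hsc : s^2 + c^2 = 1) (hu : 0 < 1 - x) (hw : 0 < 1 + x)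
    (hdp : dp = α * (1-x)^(α-1) * (-1))
    (hdq : dq = α * (1+x)^(α-1) * 1)
    (hNx : Nx = (1+x)^α + c*r*(1-x)^α)
    (hdN : dN = dq + c*r*dp)
    (hQx : Qx = Nx^2 + (s*r*(1-x)^α)^2)
    (hdQ : dQ = (2:ℕ) * Nx^1 * dN + (2:ℕ) * (s*r*(1-x)^α)^1 * (s*r*dp))
    (hden : denom = r * (1 - x) ^ (2 * α) + 2 * c * (1 + x) ^ α * (1 - x) ^ α
          + r⁻¹ * (1 + x) ^ (2 * α))
    (ht : t = Real.sqrt Qx) :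
    (Real.pi*α)⁻¹ * (1 / (s*r*(1-x)^α / t) * ((dN * t - Nx * (1/(2*t) * dQ)) / t^2))
      = 2 * s / Real.pi * ((1 - x) ^ (α - 1) * (1 + x) ^ (α - 1)) / denom := by
  have hπ : (0:ℝ) < Real.pi := Real.pi_pos
  have hp0 : (0:ℝ) < (1-x)^α := Real.rpow_pos_of_pos hu α
  have hq0 : (0:ℝ) < (1+x)^α := Real.rpow_pos_of_pos hw α
  have hQ0 : (0:ℝ) < Qx := by
    have h2 : (0:ℝ) < (s*r*(1-x)^α)^2 := by positivity
    nlinarith [sq_nonneg Nx]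
  have ht0 : (0:ℝ) < t := ht ▸ Real.sqrt_pos.mpr hQ0
  have ht2 : t^2 = Qx := ht ▸ Real.sq_sqrt hQ0.le
  have hps : (1-x)^(α-1) = (1-x)^α / (1-x) := by
    rw [Real.rpow_sub hu, Real.rpow_one]
  have hqs : (1+x)^(α-1) = (1+x)^α / (1+x) := by
    rw [Real.rpow_sub hw, Real.rpow_one]
  have h2a : (1-x)^(2*α) = ((1-x)^α)^2 := by
    rw [show (2:ℝ)*α = α*2 by ring, Real.rpow_mul hu.le, Real.rpow_two]
  have h2b : (1+x)^(2*α) = ((1+x)^α)^2 := by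
    rw [show (2:ℝ)*α = α*2 by ring, Real.rpow_mul hw.le, Real.rpow_two]
  have hQden : Qx = r * denom := by
    rw [hden, h2a, h2b, hQx, hNx]
    field_simp
    linear_combination (r^2 * ((1-x)^α)^2) * hsc
  have hden0 : (0:ℝ) < denom := by nlinarith
  have h6 : 2*dN*Qx - Nx*dQ = 2*s^2*r^2*(1-x)^α*((1-x)^α*dq - (1+x)^α*dp) := by
    rw [hQx, hdQ, hdN, hNx]; push_cast; ring
  have key : 1 / (s*r*(1-x)^α / t) * ((dN * t - Nx * (1/(2*t) * dQ)) / t^2)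
      = (2*dN*t^2 - Nx*dQ) / (2*(s*r*(1-x)^α)*t^2) := by
    field_simp
  rw [key, ht2, h6, hQden, hps, hqs, hdp, hdq, hps, hqs]
  field_simp
  ring

private lemma lamperti_hasDeriv (α c s r x : ℝ) (h0 : 0 < α) (hr : 0 < r)
    (hs : 0 < s) (hsc : s^2 + c^2 = 1) (hu : 0 < 1 - x) (hw : 0 < 1 + x) :
    HasDerivAt (fun x : ℝ => (Real.pi*α)⁻¹ * Real.arcsin
        (((1+x)^α + c*r*(1-x)^α) / Real.sqrt ((((1+x)^α + c*r*(1-x)^α))^2 + (s*r*(1-x)^α)^2)))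
      (2 * s / Real.pi * ((1 - x) ^ (α - 1) * (1 + x) ^ (α - 1)) /
        (r * (1 - x) ^ (2 * α) + 2 * c * (1 + x) ^ α * (1 - x) ^ α
          + r⁻¹ * (1 + x) ^ (2 * α))) x := by
  have hp0 : (0:ℝ) < (1-x)^α := Real.rpow_pos_of_pos hu α
  have hq0 : (0:ℝ) < (1+x)^α := Real.rpow_pos_of_pos hw α
  have hp : HasDerivAt (fun x : ℝ => (1-x)^α) (α * (1-x)^(α-1) * (-1)) x := by
    have h1 : HasDerivAt (fun x : ℝ => 1 - x) (-1) x := (hasDerivAt_id x).const_sub 1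
    exact (Real.hasDerivAt_rpow_const (x := 1-x) (p := α) (Or.inl hu.ne')).comp x h1
  have hq : HasDerivAt (fun x : ℝ => (1+x)^α) (α * (1+x)^(α-1) * 1) x := by
    have h1 : HasDerivAt (fun x : ℝ => 1 + x) 1 x := (hasDerivAt_id x).const_add 1
    exact (Real.hasDerivAt_rpow_const (x := 1+x) (p := α) (Or.inl hw.ne')).comp x h1
  have hN : HasDerivAt (fun x : ℝ => (1+x)^α + c*r*(1-x)^α)
      (α * (1+x)^(α-1) * 1 + c*r*(α * (1-x)^(α-1) * (-1))) x := hq.add (hp.const_mul _)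
  have hQfun : HasDerivAt (fun x : ℝ => ((1+x)^α + c*r*(1-x)^α)^2 + (s*r*(1-x)^α)^2)
      ((2:ℕ) * ((1+x)^α + c*r*(1-x)^α)^1 * (α * (1+x)^(α-1) * 1 + c*r*(α * (1-x)^(α-1) * (-1)))
        + (2:ℕ) * (s*r*(1-x)^α)^1 * (s*r*(α * (1-x)^(α-1) * (-1)))) x :=
    (hN.pow 2).add ((hp.const_mul (s*r)).pow 2)
  have hQ0 : (0:ℝ) < ((1+x)^α + c*r*(1-x)^α)^2 + (s*r*(1-x)^α)^2 := by
    have h2 : (0:ℝ) < (s*r*(1-x)^α)^2 := by positivity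
    nlinarith [sq_nonneg ((1+x)^α + c*r*(1-x)^α)]
  have ht0 : (0:ℝ) < Real.sqrt (((1+x)^α + c*r*(1-x)^α)^2 + (s*r*(1-x)^α)^2) :=
    Real.sqrt_pos.mpr hQ0
  have ht2 : Real.sqrt (((1+x)^α + c*r*(1-x)^α)^2 + (s*r*(1-x)^α)^2)^2
      = ((1+x)^α + c*r*(1-x)^α)^2 + (s*r*(1-x)^α)^2 := Real.sq_sqrt hQ0.le
  have hsqQ : HasDerivAt (fun x : ℝ =>
      Real.sqrt (((1+x)^α + c*r*(1-x)^α)^2 + (s*r*(1-x)^α)^2))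
      (1/(2*Real.sqrt (((1+x)^α + c*r*(1-x)^α)^2 + (s*r*(1-x)^α)^2)) *
        ((2:ℕ) * ((1+x)^α + c*r*(1-x)^α)^1 * (α * (1+x)^(α-1) * 1 + c*r*(α * (1-x)^(α-1) * (-1)))
        + (2:ℕ) * (s*r*(1-x)^α)^1 * (s*r*(α * (1-x)^(α-1) * (-1))))) x :=
    (Real.hasDerivAt_sqrt hQ0.ne').comp x hQfun
  have hRatio : HasDerivAt (fun x : ℝ =>
      ((1+x)^α + c*r*(1-x)^α) / Real.sqrt (((1+x)^α + c*r*(1-x)^α)^2 + (s*r*(1-x)^α)^2))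
      (((α * (1+x)^(α-1) * 1 + c*r*(α * (1-x)^(α-1) * (-1)))
          * Real.sqrt (((1+x)^α + c*r*(1-x)^α)^2 + (s*r*(1-x)^α)^2)
        - ((1+x)^α + c*r*(1-x)^α) *
          (1/(2*Real.sqrt (((1+x)^α + c*r*(1-x)^α)^2 + (s*r*(1-x)^α)^2)) *
            ((2:ℕ) * ((1+x)^α + c*r*(1-x)^α)^1 * (α * (1+x)^(α-1) * 1 + c*r*(α * (1-x)^(α-1) * (-1)))
              + (2:ℕ) * (s*r*(1-x)^α)^1 * (s*r*(α * (1-x)^(α-1) * (-1))))))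
        / Real.sqrt (((1+x)^α + c*r*(1-x)^α)^2 + (s*r*(1-x)^α)^2)^2) x :=
    hN.div hsqQ ht0.ne'
  have hNlt : (((1+x)^α + c*r*(1-x)^α) / Real.sqrt (((1+x)^α + c*r*(1-x)^α)^2 + (s*r*(1-x)^α)^2))^2 < 1 := by
    rw [div_pow, ht2]
    have h2 : (0:ℝ) < (s*r*(1-x)^α)^2 := by positivity
    rw [div_lt_one hQ0]
    nlinarith
  have hRne1 : ((1+x)^α + c*r*(1-x)^α) / Real.sqrt (((1+x)^α + c*r*(1-x)^α)^2 + (s*r*(1-x)^α)^2) ≠ 1 := by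
    intro h; rw [h] at hNlt; norm_num at hNlt
  have hRne1' : ((1+x)^α + c*r*(1-x)^α) / Real.sqrt (((1+x)^α + c*r*(1-x)^α)^2 + (s*r*(1-x)^α)^2) ≠ -1 := by
    intro h; rw [h] at hNlt; norm_num at hNlt
  have harc := (Real.hasDerivAt_arcsin hRne1' hRne1).comp x hRatio
  have hG := harc.const_mul (Real.pi*α)⁻¹
  have hsub : Real.sqrt (1 - (((1+x)^α + c*r*(1-x)^α) /
      Real.sqrt (((1+x)^α + c*r*(1-x)^α)^2 + (s*r*(1-x)^α)^2))^2)
      = s*r*(1-x)^α / Real.sqrt (((1+x)^α + c*r*(1-x)^α)^2 + (s*r*(1-x)^α)^2) := by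
    have h1 : 1 - (((1+x)^α + c*r*(1-x)^α) /
        Real.sqrt (((1+x)^α + c*r*(1-x)^α)^2 + (s*r*(1-x)^α)^2))^2
        = (s*r*(1-x)^α)^2 / Real.sqrt (((1+x)^α + c*r*(1-x)^α)^2 + (s*r*(1-x)^α)^2)^2 := by
      rw [div_pow, ht2]
      field_simp
      ring
    rw [h1, Real.sqrt_div (sq_nonneg _), Real.sqrt_sq (by positivity : (0:ℝ) ≤ s*r*(1-x)^α),
      Real.sqrt_sq ht0.le]
  rw [hsub] at hG
  have halg := lamperti_algebra α c s r x _ _ _ _ _ _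
    (Real.sqrt (((1+x)^α + c*r*(1-x)^α)^2 + (s*r*(1-x)^α)^2)) _
    h0 hr hs hsc hu hw rfl rfl rfl rfl rfl rfl rfl rfl
  rw [← halg]
  exact hG

private lemma lamperti_contOn (α c s r : ℝ) (h0 : 0 < α) (hr : 0 < r) (hs : 0 < s) :
    ContinuousOn (fun x : ℝ => (Real.pi*α)⁻¹ * Real.arcsin
        (((1+x)^α + c*r*(1-x)^α) / Real.sqrt ((((1+x)^α + c*r*(1-x)^α))^2 + (s*r*(1-x)^α)^2)))
      (Icc (-1:ℝ) 1) := by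
  have hrp : Continuous fun y : ℝ => y ^ α :=
    continuous_iff_continuousAt.mpr fun y => Real.continuousAt_rpow_const _ _ (Or.inr h0.le)
  have hcp : Continuous fun x : ℝ => (1-x)^α := hrp.comp (continuous_const.sub continuous_id)
  have hcq : Continuous fun x : ℝ => (1+x)^α := hrp.comp (continuous_const.add continuous_id)
  have hcN : Continuous fun x : ℝ => (1+x)^α + c*r*(1-x)^α := hcq.add (continuous_const.mul hcp)
  have hcQ : Continuous fun x : ℝ => ((1+x)^α + c*r*(1-x)^α)^2 + (s*r*(1-x)^α)^2 :=
    (hcN.pow 2).add ((continuous_const.mul hcp).pow 2)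
  have hQpos : ∀ x ∈ Icc (-1:ℝ) 1, (0:ℝ) < ((1+x)^α + c*r*(1-x)^α)^2 + (s*r*(1-x)^α)^2 := by
    intro x hx
    rcases lt_or_eq_of_le hx.2 with h | h
    · have hp0 : (0:ℝ) < (1-x)^α := Real.rpow_pos_of_pos (by linarith) α
      have h2 : (0:ℝ) < (s*r*(1-x)^α)^2 := by positivity
      nlinarith [sq_nonneg ((1+x)^α + c*r*(1-x)^α)]
    · subst h
      have h1 : ((1:ℝ)-1) = 0 := by norm_num
      rw [h1, Real.zero_rpow h0.ne']
      have hq0 : (0:ℝ) < ((1:ℝ)+1)^α := Real.rpow_pos_of_pos (by norm_num) α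
      have : (0:ℝ) < (((1:ℝ)+1)^α + c*r*0)^2 := by
        rw [mul_zero, add_zero]; positivity
      nlinarith [sq_nonneg (s*r*(0:ℝ))]
  apply ContinuousOn.mul continuousOn_const
  apply Real.continuous_arcsin.comp_continuousOn
  exact ContinuousOn.div hcN.continuousOn (Real.continuous_sqrt.comp hcQ).continuousOn
    (fun x hx => (Real.sqrt_pos.mpr (hQpos x hx)).ne')

private lemma lamperti_denom_eqA (c s r p q : ℝ) (hr : 0 < r) (hsc : s^2 + c^2 = 1) :
    r*p^2 + 2*c*q*p + r⁻¹*q^2 = r⁻¹*((r*p+c*q)^2 + (s*q)^2) := by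
  field_simp
  linear_combination (-q^2) * hsc

private lemma lamperti_denom_eqB (c s r p q : ℝ) (hr : 0 < r) (hsc : s^2 + c^2 = 1) :
    r*p^2 + 2*c*q*p + r⁻¹*q^2 = r⁻¹*((c*r*p+q)^2 + (s*r*p)^2) := by
  field_simp
  linear_combination (-r^2*p^2) * hsc

private lemma lamperti_ptbound (s r P1 Q1 D : ℝ) (hs : 0 < s) (hr : 0 < r)
    (hP1 : 0 ≤ P1) (hQ1 : 0 ≤ Q1) (hD : 0 < D)
    (hcase : (Q1 ≤ 1 ∧ s^2*r⁻¹ ≤ D) ∨ (P1 ≤ 1 ∧ s^2*r ≤ D)) :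
    2*s/Real.pi * (P1*Q1)/D ≤ (2/(Real.pi*s)*(r+r⁻¹)) * (P1+Q1) := by
  have hπ : (0:ℝ) < Real.pi := Real.pi_pos
  have hr' : (0:ℝ) < r⁻¹ := inv_pos.mpr hr
  rcases hcase with ⟨hle, hDlb⟩ | ⟨hle, hDlb⟩
  · have step1 : 2*s/Real.pi * (P1*Q1)/D ≤ 2*s/Real.pi * P1 / (s^2*r⁻¹) := by
      apply div_le_div₀ (by positivity) _ (by positivity) hDlb
      exact mul_le_mul_of_nonneg_left (mul_le_of_le_one_right hP1 hle) (by positivity)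
    refine step1.trans ?_
    have heq : 2*s/Real.pi * P1 / (s^2*r⁻¹) = (2/(Real.pi*s)*r) * P1 := by
      field_simp
    rw [heq]
    have h2 : (0:ℝ) < 2/(Real.pi*s) := by positivity
    nlinarith [mul_nonneg h2.le (mul_nonneg hr'.le hQ1), mul_nonneg h2.le (mul_nonneg hr.le hQ1),
      mul_nonneg (mul_nonneg h2.le hr'.le) hP1]
  · have step1 : 2*s/Real.pi * (P1*Q1)/D ≤ 2*s/Real.pi * Q1 / (s^2*r) := by
      apply div_le_div₀ (by positivity) _ (by positivity) hDlb
      exact mul_le_mul_of_nonneg_left (mul_le_of_le_one_left hQ1 hle) (by positivity)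
    refine step1.trans ?_
    have heq : 2*s/Real.pi * Q1 / (s^2*r) = (2/(Real.pi*s)*r⁻¹) * Q1 := by
      field_simp
    rw [heq]
    have h2 : (0:ℝ) < 2/(Real.pi*s) := by positivity
    nlinarith [mul_nonneg h2.le (mul_nonneg hr.le hP1), mul_nonneg h2.le (mul_nonneg hr'.le hP1),
      mul_nonneg (mul_nonneg h2.le hr.le) hQ1]

private lemma lamperti_boundA (c s r P Q : ℝ) (hr : 0 < r) (hQ1 : 1 ≤ Q) :
    s^2*r⁻¹ ≤ r⁻¹*((r*P+c*Q)^2 + (s*Q)^2) := by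
  have hr' : (0:ℝ) < r⁻¹ := inv_pos.mpr hr
  have hQ2 : (1:ℝ) ≤ Q*Q := by nlinarith
  nlinarith [mul_nonneg hr'.le (sq_nonneg (r*P+c*Q)),
    mul_nonneg (mul_nonneg hr'.le (sq_nonneg s)) (sub_nonneg.mpr hQ2)]

private lemma lamperti_boundB (c s r P Q : ℝ) (hr : 0 < r) (hP1 : 1 ≤ P) :
    s^2*r ≤ r⁻¹*((c*r*P+Q)^2 + (s*r*P)^2) := by
  have hr' : (0:ℝ) < r⁻¹ := inv_pos.mpr hr
  have hP2 : (1:ℝ) ≤ P*P := by nlinarith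
  have e : r⁻¹*(s*r*P)^2 = s^2*r*(P*P) := by field_simp
  nlinarith [mul_nonneg hr'.le (sq_nonneg (c*r*P+Q)),
    mul_nonneg (mul_nonneg hr.le (sq_nonneg s)) (sub_nonneg.mpr hP2)]

private lemma lamperti_integrable (α c s r : ℝ) (h0 : 0 < α) (h1 : α < 1) (hr : 0 < r)
    (hs : 0 < s) (hsc : s^2 + c^2 = 1) :
    IntervalIntegrable (fun x : ℝ =>
      2 * s / Real.pi * ((1 - x) ^ (α - 1) * (1 + x) ^ (α - 1)) /
        (r * (1 - x) ^ (2 * α) + 2 * c * (1 + x) ^ α * (1 - x) ^ α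
          + r⁻¹ * (1 + x) ^ (2 * α))) volume (-1) 1 := by
  have hπ : (0:ℝ) < Real.pi := Real.pi_pos
  have hr' : (0:ℝ) < r⁻¹ := inv_pos.mpr hr
  have j : IntervalIntegrable (fun x : ℝ => x ^ (α-1)) volume 0 2 :=
    intervalIntegral.intervalIntegrable_rpow' (by linarith)
  have i1 : IntervalIntegrable (fun x : ℝ => (1-x)^(α-1)) volume (-1) 1 := by
    have h := (j.comp_sub_left 1).symm
    norm_num at h
    exact h
  have i2 : IntervalIntegrable (fun x : ℝ => (1+x)^(α-1)) volume (-1) 1 := by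
    have h := j.comp_add_left 1
    norm_num at h
    exact h
  have hg : IntervalIntegrable
      (fun x : ℝ => 2/(Real.pi*s)*(r+r⁻¹) * ((1-x)^(α-1) + (1+x)^(α-1))) volume (-1) 1 :=
    (i1.add i2).const_mul _
  rw [intervalIntegrable_iff_integrableOn_Ioo_of_le (by norm_num : (-1:ℝ) ≤ 1)]
  have hgIoo := (intervalIntegrable_iff_integrableOn_Ioo_of_le (by norm_num : (-1:ℝ) ≤ 1)).mp hg
  apply Integrable.mono hgIoo
  · -- measurability
    apply ContinuousOn.aestronglyMeasurable _ measurableSet_Ioo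
    apply ContinuousOn.div
    · apply ContinuousOn.mul continuousOn_const
      apply ContinuousOn.mul
      · exact continuousOn_of_forall_continuousAt fun x hx =>
          (Real.continuousAt_rpow_const (1-x) (α-1)
            (Or.inl (by simp only [mem_Ioo] at hx; intro h; nlinarith [hx.2]))).comp
            ((continuous_const.sub continuous_id).continuousAt)
      · exact continuousOn_of_forall_continuousAt fun x hx =>
          (Real.continuousAt_rpow_const (1+x) (α-1)
            (Or.inl (by simp only [mem_Ioo] at hx; intro h; nlinarith [hx.1]))).comp
            ((continuous_const.add continuous_id).continuousAt)
    · have hrp2 : Continuous fun y : ℝ => y ^ (2*α) :=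
        continuous_iff_continuousAt.mpr fun y =>
          Real.continuousAt_rpow_const _ _ (Or.inr (by linarith))
      have hrp : Continuous fun y : ℝ => y ^ α :=
        continuous_iff_continuousAt.mpr fun y => Real.continuousAt_rpow_const _ _ (Or.inr h0.le)
      exact Continuous.continuousOn <| ((continuous_const.mul
          (hrp2.comp (continuous_const.sub continuous_id))).add
        ((continuous_const.mul (hrp.comp (continuous_const.add continuous_id))).mul
          (hrp.comp (continuous_const.sub continuous_id)))).add
        (continuous_const.mul (hrp2.comp (continuous_const.add continuous_id)))
    · intro x hx
      simp only [mem_Ioo] at hx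
      have hu : (0:ℝ) < 1 - x := by linarith
      have hw : (0:ℝ) < 1 + x := by linarith
      have h2a : (1-x)^(2*α) = ((1-x)^α)^2 := by
        rw [show (2:ℝ)*α = α*2 by ring, Real.rpow_mul hu.le, Real.rpow_two]
      have h2b : (1+x)^(2*α) = ((1+x)^α)^2 := by
        rw [show (2:ℝ)*α = α*2 by ring, Real.rpow_mul hw.le, Real.rpow_two]
      have hp0 : (0:ℝ) < (1-x)^α := Real.rpow_pos_of_pos hu α
      rw [h2a, h2b, lamperti_denom_eqB c s r _ _ hr hsc]
      have hB : (0:ℝ) < (s*r*(1-x)^α)^2 := by positivity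
      exact (mul_pos hr' (add_pos_of_nonneg_of_pos (sq_nonneg _) hB)).ne'
  · -- bound
    rw [ae_restrict_iff' measurableSet_Ioo]
    filter_upwards with x hx
    simp only [mem_Ioo] at hx
    have hu : (0:ℝ) < 1 - x := by linarith
    have hw : (0:ℝ) < 1 + x := by linarith
    have hp0 : (0:ℝ) < (1-x)^α := Real.rpow_pos_of_pos hu α
    have hq0 : (0:ℝ) < (1+x)^α := Real.rpow_pos_of_pos hw α
    have hps0 : (0:ℝ) ≤ (1-x)^(α-1) := Real.rpow_nonneg hu.le _
    have hqs0 : (0:ℝ) ≤ (1+x)^(α-1) := Real.rpow_nonneg hw.le _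
    have h2a : (1-x)^(2*α) = ((1-x)^α)^2 := by
      rw [show (2:ℝ)*α = α*2 by ring, Real.rpow_mul hu.le, Real.rpow_two]
    have h2b : (1+x)^(2*α) = ((1+x)^α)^2 := by
      rw [show (2:ℝ)*α = α*2 by ring, Real.rpow_mul hw.le, Real.rpow_two]
    have heB : r * (1 - x) ^ (2 * α) + 2 * c * (1 + x) ^ α * (1 - x) ^ α
          + r⁻¹ * (1 + x) ^ (2 * α)
        = r⁻¹*((c*r*(1-x)^α+(1+x)^α)^2 + (s*r*(1-x)^α)^2) := by
      rw [h2a, h2b]; exact lamperti_denom_eqB c s r _ _ hr hsc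
    have heA : r * (1 - x) ^ (2 * α) + 2 * c * (1 + x) ^ α * (1 - x) ^ α
          + r⁻¹ * (1 + x) ^ (2 * α)
        = r⁻¹*((r*(1-x)^α+c*(1+x)^α)^2 + (s*(1+x)^α)^2) := by
      rw [h2a, h2b]; exact lamperti_denom_eqA c s r _ _ hr hsc
    have hD0 : (0:ℝ) < r * (1 - x) ^ (2 * α) + 2 * c * (1 + x) ^ α * (1 - x) ^ α
          + r⁻¹ * (1 + x) ^ (2 * α) := by
      rw [heB]
      have hB : (0:ℝ) < (s*r*(1-x)^α)^2 := by positivity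
      exact mul_pos hr' (add_pos_of_nonneg_of_pos (sq_nonneg _) hB)
    have hF0 : (0:ℝ) ≤ 2 * s / Real.pi * ((1 - x) ^ (α - 1) * (1 + x) ^ (α - 1)) /
        (r * (1 - x) ^ (2 * α) + 2 * c * (1 + x) ^ α * (1 - x) ^ α
          + r⁻¹ * (1 + x) ^ (2 * α)) := by positivity
    have hg0 : (0:ℝ) ≤ 2/(Real.pi*s)*(r+r⁻¹) * ((1-x)^(α-1) + (1+x)^(α-1)) := by positivity
    rw [Real.norm_of_nonneg hF0, Real.norm_of_nonneg hg0]
    apply lamperti_ptbound s r _ _ _ hs hr hps0 hqs0 hD0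
    rcases le_total 0 x with hx0 | hx0
    · left
      constructor
      · exact Real.rpow_le_one_of_one_le_of_nonpos (by linarith) (by linarith)
      · have hq1 : (1:ℝ) ≤ (1+x)^α := by
          calc (1:ℝ) = 1^α := (Real.one_rpow α).symm
          _ ≤ (1+x)^α := Real.rpow_le_rpow (by norm_num) (by linarith) h0.le
        rw [heA]
        exact lamperti_boundA c s r _ _ hr hq1
    · right
      constructor
      · exact Real.rpow_le_one_of_one_le_of_nonpos (by linarith) (by linarith)
      · have hp1 : (1:ℝ) ≤ (1-x)^α := by
          calc (1:ℝ) = 1^α := (Real.one_rpow α).symm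
          _ ≤ (1-x)^α := Real.rpow_le_rpow (by norm_num) (by linarith) h0.le
        rw [heB]
        exact lamperti_boundB c s r _ _ hr hp1

private lemma lamperti_key (α c s r : ℝ) (h0 : 0 < α) (h1 : α < 1) (hr : 0 < r)
    (hs : 0 < s) (hsc : s^2 + c^2 = 1)
    (harcc : Real.arcsin c = Real.pi/2 - Real.pi*α) :
    ∫ x in (-1:ℝ)..1, 2 * s / Real.pi * ((1 - x) ^ (α - 1) * (1 + x) ^ (α - 1)) /
        (r * (1 - x) ^ (2 * α) + 2 * c * (1 + x) ^ α * (1 - x) ^ α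
          + r⁻¹ * (1 + x) ^ (2 * α)) = 1 := by
  have hftc := intervalIntegral.integral_eq_sub_of_hasDeriv_right_of_le
    (by norm_num : (-1:ℝ) ≤ 1)
    (lamperti_contOn α c s r h0 hr hs)
    (fun x hx => (lamperti_hasDeriv α c s r x h0 hr hs hsc
      (by have := hx.2; linarith) (by have := hx.1; linarith)).hasDerivWithinAt)
    (lamperti_integrable α c s r h0 h1 hr hs hsc)
  rw [hftc]
  have h20 : (0:ℝ) < (2:ℝ)^α := Real.rpow_pos_of_pos two_pos α
  have hG1 : (Real.pi*α)⁻¹ * Real.arcsin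
      (((1+(1:ℝ))^α + c*r*(1-(1:ℝ))^α) / Real.sqrt ((((1+(1:ℝ))^α + c*r*(1-(1:ℝ))^α))^2 + (s*r*(1-(1:ℝ))^α)^2))
      = (Real.pi*α)⁻¹ * (Real.pi/2) := by
    have e1 : ((1:ℝ) - 1) = 0 := by norm_num
    have e2 : ((1:ℝ) + 1) = 2 := by norm_num
    simp only [e1, e2, Real.zero_rpow h0.ne', mul_zero, add_zero]
    rw [show ((2:ℝ)^α)^2 + 0^2 = ((2:ℝ)^α)^2 by ring, Real.sqrt_sq h20.le,
      div_self h20.ne', Real.arcsin_one]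
  have hG2 : (Real.pi*α)⁻¹ * Real.arcsin
      (((1+(-1:ℝ))^α + c*r*(1-(-1:ℝ))^α) / Real.sqrt ((((1+(-1:ℝ))^α + c*r*(1-(-1:ℝ))^α))^2 + (s*r*(1-(-1:ℝ))^α)^2))
      = (Real.pi*α)⁻¹ * (Real.pi/2 - Real.pi*α) := by
    have e1 : ((1:ℝ) - (-1)) = 2 := by norm_num
    have e2 : ((1:ℝ) + (-1)) = 0 := by norm_num
    simp only [e1, e2, Real.zero_rpow h0.ne', zero_add]
    have hQe : (c*r*(2:ℝ)^α)^2 + (s*r*(2:ℝ)^α)^2 = (r*(2:ℝ)^α)^2 := by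
      linear_combination ((r*(2:ℝ)^α)^2) * hsc
    rw [hQe, Real.sqrt_sq (by positivity),
      show c * r * (2:ℝ)^α / (r * (2:ℝ)^α) = c by field_simp, harcc]
  rw [hG1, hG2]
  have hπ : Real.pi ≠ 0 := Real.pi_ne_zero
  field_simp
  ring

/-- The arcsine Lamperti density integrates to 1 over (-1,1). -/
theorem stmt5 (α m : ℝ) (hα : α ∈ Set.Ioo (0:ℝ) 1) (hm : m ∈ Set.Ioo (-1:ℝ) 1) :
    ∫ x in (-1:ℝ)..1, arcsineLamperti α m x = 1 := by
  obtain ⟨hm1, hm2⟩ := hm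
  obtain ⟨ha1, ha2⟩ := hα
  have hr : 0 < (1+m)/(1-m) := div_pos (by linarith) (by linarith)
  have hπ : (0:ℝ) < Real.pi := Real.pi_pos
  have hs : 0 < Real.sin (Real.pi*α) :=
    Real.sin_pos_of_pos_of_lt_pi (by positivity)
      (by nlinarith [mul_pos hπ (show (0:ℝ) < 1 - α by linarith)])
  have hsc : Real.sin (Real.pi*α)^2 + Real.cos (Real.pi*α)^2 = 1 := Real.sin_sq_add_cos_sq _
  have harcc : Real.arcsin (Real.cos (Real.pi*α)) = Real.pi/2 - Real.pi*α := by
    rw [← Real.sin_pi_div_two_sub, Real.arcsin_sin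
      (by nlinarith [mul_pos hπ (show (0:ℝ) < 1 - α by linarith)])
      (by nlinarith [mul_pos hπ ha1])]
  unfold arcsineLamperti
  exact lamperti_key α (Real.cos (Real.pi*α)) (Real.sin (Real.pi*α)) ((1+m)/(1-m))
    ha1 ha2 hr hs hsc harcc
end

section
/- Let u_n = P(τ^u = n), d_n = P(τ^d = n) be the distributions of two independent positive-integer-valued random variables, let T_u(z), T_d(z) be the generating functions of their tails and F_u(z), F_d(z) their probability generating functions. Define p_{n,k} by the recursion p_{n,k} = ∑_{m+l ≤ n, m ≤ k} d_l u_m p_{n-(m+l), k-m} + ∑_{l ≤ n} d_l 𝒯_u(n-l) δ_{k, n-l+1} + 𝒯_d(n) δ_{k,0}. Then the double generating function P(x,y) = ∑_{n,k≥0} p_{n,k} x^n y^k satisfies P(x,y) = (F_d(x) T_u(xy) y + T_d(x)) / (1 - F_d(x) F_u(xy)) for |x|, |y| < 1. -/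
/-- Tail sequence `𝒯(n) = P(τ > n) = ∑_{m > n} u m` of a distribution `u` on ℕ. -/
noncomputable def tailSeq (u : ℕ → ℝ) (n : ℕ) : ℝ := ∑' m : ℕ, if n < m then u m else 0

open Finset

lemma tailSeq_add_eq {u : ℕ → ℝ} (husum : HasSum u 1) (n : ℕ) :
    (∑ m ∈ Finset.range (n + 1), u m) + tailSeq u n = 1 := by
  classical
  have hs : Summable u := husum.summable
  have h1 : Summable (fun m => if n < m then u m else 0) := by
    have := hs.indicator (s := {m | n < m})
    refine this.congr fun m => ?_
    simp [Set.indicator_apply]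
  have h2 : Summable (fun m => if n < m then 0 else u m) := by
    have := hs.indicator (s := {m | ¬ n < m})
    refine this.congr fun m => ?_
    by_cases h : n < m <;> simp [Set.indicator_apply, h]
  have hsplit : (fun m => if n < m then u m else 0) + (fun m => if n < m then 0 else u m) = u := by
    funext m; by_cases h : n < m <;> simp [h]
  have hsum : tailSeq u n + ∑' m, (if n < m then 0 else u m) = 1 := by
    rw [tailSeq, ← Summable.tsum_add h1 h2]
    have := husum.tsum_eq
    rw [← this]
    exact tsum_congr fun m => by by_cases h : n < m <;> simp [h]
  have hfin : (∑' m, (if n < m then 0 else u m)) = ∑ m ∈ Finset.range (n + 1), u m := by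
    rw [tsum_eq_sum (s := Finset.range (n + 1))]
    · apply Finset.sum_congr rfl
      intro m hm
      simp only [Finset.mem_range] at hm
      have : ¬ n < m := by omega
      simp [this]
    · intro m hm
      simp only [Finset.mem_range] at hm
      have : n < m := by omega
      simp [this]
  rw [hfin] at hsum
  linarith

lemma tailSeq_nonneg {u : ℕ → ℝ} (hupos : ∀ n, 0 ≤ u n) (hs : Summable u) (n : ℕ) :
    0 ≤ tailSeq u n := by
  apply tsum_nonneg
  intro m; split <;> simp [hupos m]

lemma tailSeq_le_one {u : ℕ → ℝ} (hupos : ∀ n, 0 ≤ u n) (husum : HasSum u 1) (n : ℕ) :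
    tailSeq u n ≤ 1 := by
  have := tailSeq_add_eq husum n
  have h2 : 0 ≤ ∑ m ∈ Finset.range (n + 1), u m := Finset.sum_nonneg fun m _ => hupos m
  linarith

lemma abs_tsum_le_abs {c : ℕ → ℝ} {t : ℝ} (ht : |t| < 1) (hc0 : ∀ n, 0 ≤ c n)
    (hcz : c 0 = 0) (hcs : HasSum c 1) : |∑' n : ℕ, c n * t ^ n| ≤ |t| := by
  have hn : Summable (fun n => ‖c n * t ^ n‖) := by
    apply Summable.of_nonneg_of_le (fun n => norm_nonneg _) (fun n => ?_)
      (summable_geometric_of_lt_one (abs_nonneg t) ht)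
    rw [Real.norm_eq_abs, abs_mul, abs_pow]
    calc |c n| * |t| ^ n ≤ 1 * |t| ^ n := by
          gcongr
          rw [abs_of_nonneg (hc0 n)]
          exact le_hasSum hcs n (fun j _ => hc0 j)
      _ = |t| ^ n := one_mul _
  have h1 : |∑' n : ℕ, c n * t ^ n| ≤ ∑' n : ℕ, ‖c n * t ^ n‖ := by
    rw [← Real.norm_eq_abs]
    exact norm_tsum_le_tsum_norm hn
  have h2 : ∑' n : ℕ, ‖c n * t ^ n‖ ≤ ∑' n : ℕ, c n * |t| := by
    apply Summable.tsum_le_tsum _ hn (hcs.summable.mul_right |t|)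
    intro n
    rw [Real.norm_eq_abs, abs_mul, abs_pow, abs_of_nonneg (hc0 n)]
    rcases Nat.eq_zero_or_pos n with h | h
    · subst h; simp [hcz]
    · gcongr
      · exact hc0 n
      · exact pow_le_of_le_one (abs_nonneg t) ht.le (by omega)
  have h3 : ∑' n : ℕ, c n * |t| = |t| := by
    rw [tsum_mul_right, hcs.tsum_eq, one_mul]
  linarith

/-- summability of `c n * t ^ n` in norm when `|c| ≤ 1`, `|t| < 1`. -/
lemma summable_norm_aux {c : ℕ → ℝ} {t : ℝ} (ht : |t| < 1) (hc : ∀ n, |c n| ≤ 1) :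
    Summable (fun n => ‖c n * t ^ n‖) := by
  apply Summable.of_nonneg_of_le (fun n => norm_nonneg _) (fun n => ?_)
    (summable_geometric_of_lt_one (abs_nonneg t) ht)
  rw [Real.norm_eq_abs, abs_mul, abs_pow]
  calc |c n| * |t| ^ n ≤ 1 * |t| ^ n := by
        gcongr; exact hc n
    _ = |t| ^ n := one_mul _


lemma p_facts (u d : ℕ → ℝ)
    (hu0 : u 0 = 0) (hd0 : d 0 = 0)
    (hupos : ∀ n, 0 ≤ u n) (hdpos : ∀ n, 0 ≤ d n)
    (husum : HasSum u 1) (hdsum : HasSum d 1)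
    (p : ℕ → ℕ → ℝ)
    (hrec : ∀ n k : ℕ, p n k
      = (∑ m ∈ Finset.range (k + 1), ∑ l ∈ Finset.range (n + 1),
          if m + l ≤ n then d l * u m * p (n - (m + l)) (k - m) else 0)
        + (∑ l ∈ Finset.range (n + 1),
            d l * tailSeq u (n - l) * (if k = n - l + 1 then 1 else 0))
        + tailSeq d n * (if k = 0 then 1 else 0)) :
    ∀ n : ℕ, (∀ k, 0 ≤ p n k) ∧ (∀ k, n + 1 < k → p n k = 0)
      ∧ (∑ k ∈ Finset.range (n + 2), p n k = 1) := by
  intro n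
  induction n using Nat.strong_induction_on with
  | _ n ih =>
  have hTu : ∀ m, 0 ≤ tailSeq u m := tailSeq_nonneg hupos husum.summable
  have hTd : ∀ m, 0 ≤ tailSeq d m := tailSeq_nonneg hdpos hdsum.summable
  -- nonnegativity
  have hnn : ∀ k, 0 ≤ p n k := by
    intro k
    rw [hrec]
    have h1 : 0 ≤ ∑ m ∈ Finset.range (k + 1), ∑ l ∈ Finset.range (n + 1),
        if m + l ≤ n then d l * u m * p (n - (m + l)) (k - m) else 0 := by
      apply Finset.sum_nonneg; intro m _
      apply Finset.sum_nonneg; intro l hl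
      split
      · rename_i hml
        rcases Nat.eq_zero_or_pos l with hl0 | hl0
        · subst hl0; simp [hd0]
        · have hlt : n - (m + l) < n := by omega
          exact mul_nonneg (mul_nonneg (hdpos l) (hupos m)) ((ih _ hlt).1 _)
      · exact le_rfl
    have h2 : 0 ≤ ∑ l ∈ Finset.range (n + 1),
        d l * tailSeq u (n - l) * (if k = n - l + 1 then 1 else 0) := by
      apply Finset.sum_nonneg; intro l _
      have : (0:ℝ) ≤ if k = n - l + 1 then 1 else 0 := by split <;> norm_num
      exact mul_nonneg (mul_nonneg (hdpos l) (hTu _)) this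
    have h3 : 0 ≤ tailSeq d n * (if k = 0 then 1 else 0) := by
      have : (0:ℝ) ≤ if k = 0 then 1 else 0 := by split <;> norm_num
      exact mul_nonneg (hTd n) this
    linarith
  refine ⟨hnn, ?_, ?_⟩
  -- vanishing
  · intro k hk
    rw [hrec]
    have h3 : tailSeq d n * (if k = 0 then 1 else 0) = 0 := by
      have : k ≠ 0 := by omega
      simp [this]
    have h2 : (∑ l ∈ Finset.range (n + 1),
        d l * tailSeq u (n - l) * (if k = n - l + 1 then 1 else 0)) = 0 := by
      apply Finset.sum_eq_zero; intro l hl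
      simp only [Finset.mem_range] at hl
      have : k ≠ n - l + 1 := by omega
      simp [this]
    have h1 : (∑ m ∈ Finset.range (k + 1), ∑ l ∈ Finset.range (n + 1),
        if m + l ≤ n then d l * u m * p (n - (m + l)) (k - m) else 0) = 0 := by
      apply Finset.sum_eq_zero; intro m hm
      apply Finset.sum_eq_zero; intro l hl
      simp only [Finset.mem_range] at hm hl
      split
      · rename_i hml
        rcases Nat.eq_zero_or_pos l with hl0 | hl0
        · subst hl0; simp [hd0]
        rcases Nat.eq_zero_or_pos m with hm0 | hm0
        · subst hm0; simp [hu0]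
        have hlt : n - (m + l) < n := by omega
        have hz : p (n - (m + l)) (k - m) = 0 := by
          apply (ih _ hlt).2.1
          omega
        rw [hz, mul_zero]
      · rfl
    rw [h1, h2, h3]; ring
  -- sum equals one
  · have hshift : ∀ (N m : ℕ) (f : ℕ → ℝ),
        ∑ k ∈ Finset.range N, (if m ≤ k then f k else 0)
          = ∑ j ∈ Finset.range (N - m), f (m + j) := by
      intro N m f
      rw [← Finset.sum_filter, Finset.range_eq_Ico, Finset.Ico_filter_le,
        max_eq_right (Nat.zero_le m), Finset.sum_Ico_eq_sum_range]
    rw [Finset.sum_congr rfl (fun k _ => hrec n k)]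
    rw [Finset.sum_add_distrib, Finset.sum_add_distrib]
    have hC : ∑ k ∈ Finset.range (n + 2), tailSeq d n * (if k = 0 then 1 else 0)
        = tailSeq d n := by
      simp [mul_ite, Finset.sum_ite_eq']
    have hB : ∑ k ∈ Finset.range (n + 2), ∑ l ∈ Finset.range (n + 1),
          d l * tailSeq u (n - l) * (if k = n - l + 1 then 1 else 0)
        = ∑ l ∈ Finset.range (n + 1), d l * tailSeq u (n - l) := by
      rw [Finset.sum_comm]
      apply Finset.sum_congr rfl
      intro l hl
      simp only [Finset.mem_range] at hl
      have hmem : n - l + 1 ∈ Finset.range (n + 2) := by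
        simp only [Finset.mem_range]; omega
      simp [mul_ite, Finset.sum_ite_eq', hmem]
    have hA : ∑ k ∈ Finset.range (n + 2), ∑ m ∈ Finset.range (k + 1),
          ∑ l ∈ Finset.range (n + 1),
            (if m + l ≤ n then d l * u m * p (n - (m + l)) (k - m) else 0)
        = ∑ m ∈ Finset.range (n + 2), ∑ l ∈ Finset.range (n + 1),
            (if m + l ≤ n then d l * u m else 0) := by
      have step1 : ∀ k ∈ Finset.range (n + 2),
          (∑ m ∈ Finset.range (k + 1), ∑ l ∈ Finset.range (n + 1),
            (if m + l ≤ n then d l * u m * p (n - (m + l)) (k - m) else 0))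
          = ∑ m ∈ Finset.range (n + 2), (if m ≤ k then
              ∑ l ∈ Finset.range (n + 1),
                (if m + l ≤ n then d l * u m * p (n - (m + l)) (k - m) else 0) else 0) := by
        intro k hk
        simp only [Finset.mem_range] at hk
        rw [← Finset.sum_subset (Finset.range_subset_range.2 (by omega : k + 1 ≤ n + 2))]
        · apply Finset.sum_congr rfl
          intro m hm
          simp only [Finset.mem_range] at hm
          have : m ≤ k := by omega
          simp [this]
        · intro m _ hm
          simp only [Finset.mem_range, not_lt] at hm
          have : ¬ m ≤ k := by omega
          simp [this]
      rw [Finset.sum_congr rfl step1, Finset.sum_comm]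
      apply Finset.sum_congr rfl
      intro m hm
      simp only [Finset.mem_range] at hm
      rw [hshift (n + 2) m]
      rw [Finset.sum_comm]
      apply Finset.sum_congr rfl
      intro l hl
      simp only [Finset.mem_range] at hl
      by_cases hml : m + l ≤ n
      · simp only [hml, if_true, Nat.add_sub_cancel_left]
        rw [← Finset.mul_sum]
        rcases Nat.eq_zero_or_pos l with hl0 | hl0
        · subst hl0; simp [hd0]
        rcases Nat.eq_zero_or_pos m with hm0 | hm0
        · subst hm0; simp [hu0]
        have hlt : n - (m + l) < n := by omega
        have hsub : Finset.range (n - (m + l) + 2) ⊆ Finset.range (n + 2 - m) :=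
          Finset.range_subset_range.2 (by omega)
        have hone : ∑ j ∈ Finset.range (n + 2 - m), p (n - (m + l)) j = 1 := by
          rw [← Finset.sum_subset hsub]
          · exact (ih _ hlt).2.2
          · intro j _ hj
            simp only [Finset.mem_range, not_lt] at hj
            exact (ih _ hlt).2.1 j (by omega)
        rw [hone, mul_one]
      · simp [hml]
    rw [hA, hB, hC]
    have hswap : ∑ m ∈ Finset.range (n + 2), ∑ l ∈ Finset.range (n + 1),
          (if m + l ≤ n then d l * u m else 0)
        = ∑ l ∈ Finset.range (n + 1), d l * ∑ m ∈ Finset.range (n - l + 1), u m := by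
      rw [Finset.sum_comm]
      apply Finset.sum_congr rfl
      intro l hl
      simp only [Finset.mem_range] at hl
      rw [Finset.mul_sum]
      rw [← Finset.sum_subset (Finset.range_subset_range.2 (by omega : n - l + 1 ≤ n + 2))]
      · apply Finset.sum_congr rfl
        intro m hm
        simp only [Finset.mem_range] at hm
        have : m + l ≤ n := by omega
        simp [this, mul_comm]
      · intro m _ hm
        simp only [Finset.mem_range, not_lt] at hm
        have : ¬ m + l ≤ n := by omega
        simp [this]
    rw [hswap, ← Finset.sum_add_distrib]
    have : ∀ l ∈ Finset.range (n + 1),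
        d l * (∑ m ∈ Finset.range (n - l + 1), u m) + d l * tailSeq u (n - l) = d l := by
      intro l _
      rw [← mul_add, tailSeq_add_eq husum (n - l), mul_one]
    rw [Finset.sum_congr rfl this]
    have := tailSeq_add_eq hdsum n
    linarith

set_option maxHeartbeats 1000000 in
/-- Generating function identity for the double generating function of the occupation-time
law `p_{n,k}` of a persistent random walk built from independent run lengths with
distributions `u` (rises) and `d` (descents):
`P(x,y) = (F_d(x) T_u(xy) y + T_d(x)) / (1 - F_d(x) F_u(xy))`. -/
theorem stmt14 (u d : ℕ → ℝ)
    (hu0 : u 0 = 0) (hd0 : d 0 = 0)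
    (hupos : ∀ n, 0 ≤ u n) (hdpos : ∀ n, 0 ≤ d n)
    (husum : HasSum u 1) (hdsum : HasSum d 1)
    (p : ℕ → ℕ → ℝ)
    (hrec : ∀ n k : ℕ, p n k
      = (∑ m ∈ Finset.range (k + 1), ∑ l ∈ Finset.range (n + 1),
          if m + l ≤ n then d l * u m * p (n - (m + l)) (k - m) else 0)
        + (∑ l ∈ Finset.range (n + 1),
            d l * tailSeq u (n - l) * (if k = n - l + 1 then 1 else 0))
        + tailSeq d n * (if k = 0 then 1 else 0)) :
    ∀ x y : ℝ, |x| < 1 → |y| < 1 →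
      (∑' (n : ℕ) (k : ℕ), p n k * x ^ n * y ^ k)
        = ((∑' n : ℕ, d n * x ^ n) * (∑' n : ℕ, tailSeq u n * (x * y) ^ n) * y
            + (∑' n : ℕ, tailSeq d n * x ^ n))
          / (1 - (∑' n : ℕ, d n * x ^ n) * (∑' n : ℕ, u n * (x * y) ^ n)) := by
  intro x y hx hy
  have hfacts := p_facts u d hu0 hd0 hupos hdpos husum hdsum p hrec
  have hp0 : ∀ n k, 0 ≤ p n k := fun n k => (hfacts n).1 k
  have hp1 : ∀ n k, p n k ≤ 1 := by
    intro n k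
    by_cases hk : n + 1 < k
    · rw [(hfacts n).2.1 k hk]; norm_num
    · calc p n k ≤ ∑ j ∈ Finset.range (n + 2), p n j :=
          Finset.single_le_sum (fun j _ => hp0 n j)
            (by simp only [Finset.mem_range]; omega)
        _ = 1 := (hfacts n).2.2
  have hpabs : ∀ n k, |p n k| ≤ 1 := fun n k => by
    rw [abs_of_nonneg (hp0 n k)]; exact hp1 n k
  have hxy : |x * y| < 1 := by
    rw [abs_mul]
    nlinarith [abs_nonneg x, abs_nonneg y]
  have hu1 : ∀ n, |u n| ≤ 1 := fun n => by
    rw [abs_of_nonneg (hupos n)]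
    exact le_hasSum husum n (fun j _ => hupos j)
  have hd1 : ∀ n, |d n| ≤ 1 := fun n => by
    rw [abs_of_nonneg (hdpos n)]
    exact le_hasSum hdsum n (fun j _ => hdpos j)
  have hTu1 : ∀ n, |tailSeq u n| ≤ 1 := fun n => by
    rw [abs_of_nonneg (tailSeq_nonneg hupos husum.summable n)]
    exact tailSeq_le_one hupos husum n
  have hTd1 : ∀ n, |tailSeq d n| ≤ 1 := fun n => by
    rw [abs_of_nonneg (tailSeq_nonneg hdpos hdsum.summable n)]
    exact tailSeq_le_one hdpos hdsum n
  -- summable norms of each generating function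
  have hDn : Summable (fun n => ‖d n * x ^ n‖) := summable_norm_aux hx hd1
  have hUn : Summable (fun n => ‖u n * (x * y) ^ n‖) := summable_norm_aux hxy hu1
  have hTUn : Summable (fun n => ‖tailSeq u n * (x * y) ^ n‖) := summable_norm_aux hxy hTu1
  have hTDn : Summable (fun n => ‖tailSeq d n * x ^ n‖) := summable_norm_aux hx hTd1
  -- geometric families
  have hgx : Summable (fun n : ℕ => |x| ^ n) := summable_geometric_of_lt_one (abs_nonneg x) hx
  have hgy : Summable (fun n : ℕ => |y| ^ n) := summable_geometric_of_lt_one (abs_nonneg y) hy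
  have hgxy : Summable (fun z : ℕ × ℕ => |x| ^ z.1 * |y| ^ z.2) :=
    hgx.mul_of_nonneg hgy (fun n => pow_nonneg (abs_nonneg x) n)
      (fun n => pow_nonneg (abs_nonneg y) n)
  -- summability of the double generating function
  have hhn : Summable (fun z : ℕ × ℕ => ‖p z.1 z.2 * x ^ z.1 * y ^ z.2‖) := by
    apply Summable.of_nonneg_of_le (fun z => norm_nonneg _) (fun z => ?_) hgxy
    rw [Real.norm_eq_abs, abs_mul, abs_mul, abs_pow, abs_pow]
    calc |p z.1 z.2| * |x| ^ z.1 * |y| ^ z.2 ≤ 1 * |x| ^ z.1 * |y| ^ z.2 := by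
          gcongr ?_ * _ * _
          exact hpabs _ _
      _ = |x| ^ z.1 * |y| ^ z.2 := by ring
  have hh : Summable (fun z : ℕ × ℕ => p z.1 z.2 * x ^ z.1 * y ^ z.2) := hhn.of_norm
  -- names
  set D := ∑' n : ℕ, d n * x ^ n with hD_def
  set U := ∑' n : ℕ, u n * (x * y) ^ n with hU_def
  set TU := ∑' n : ℕ, tailSeq u n * (x * y) ^ n with hTU_def
  set TD := ∑' n : ℕ, tailSeq d n * x ^ n with hTD_def
  set P := ∑' z : ℕ × ℕ, p z.1 z.2 * x ^ z.1 * y ^ z.2 with hP_def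
  have hL : (∑' (n : ℕ) (k : ℕ), p n k * x ^ n * y ^ k) = P := (Summable.tsum_prod hh).symm
  rw [hL]
  -- the three pieces of the recursion
  set av : ℕ → ℕ → ℝ := fun n k => ∑ m ∈ Finset.range (k + 1), ∑ l ∈ Finset.range (n + 1),
      if m + l ≤ n then d l * u m * p (n - (m + l)) (k - m) else 0 with hav_def
  set bv : ℕ → ℕ → ℝ := fun n k => ∑ l ∈ Finset.range (n + 1),
      d l * tailSeq u (n - l) * (if k = n - l + 1 then 1 else 0) with hbv_def
  set cv : ℕ → ℕ → ℝ := fun n k => tailSeq d n * (if k = 0 then 1 else 0) with hcv_def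
  have habc : ∀ n k, p n k = av n k + bv n k + cv n k := fun n k => hrec n k
  have ha0 : ∀ n k, 0 ≤ av n k := by
    intro n k
    apply Finset.sum_nonneg; intro m _
    apply Finset.sum_nonneg; intro l _
    split
    · exact mul_nonneg (mul_nonneg (hdpos l) (hupos m)) (hp0 _ _)
    · exact le_rfl
  have hb0 : ∀ n k, 0 ≤ bv n k := by
    intro n k
    apply Finset.sum_nonneg; intro l _
    have h : (0:ℝ) ≤ if k = n - l + 1 then 1 else 0 := by split <;> norm_num
    exact mul_nonneg (mul_nonneg (hdpos l) (tailSeq_nonneg hupos husum.summable _)) h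
  have hc0 : ∀ n k, 0 ≤ cv n k := by
    intro n k
    have h : (0:ℝ) ≤ if k = 0 then 1 else 0 := by split <;> norm_num
    exact mul_nonneg (tailSeq_nonneg hdpos hdsum.summable _) h
  have ha1 : ∀ n k, |av n k| ≤ 1 := fun n k => by
    rw [abs_of_nonneg (ha0 n k)]
    have := habc n k; have := hb0 n k; have := hc0 n k; have := hp1 n k; linarith
  have hb1 : ∀ n k, |bv n k| ≤ 1 := fun n k => by
    rw [abs_of_nonneg (hb0 n k)]
    have := habc n k; have := ha0 n k; have := hc0 n k; have := hp1 n k; linarith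
  have hc1 : ∀ n k, |cv n k| ≤ 1 := fun n k => by
    rw [abs_of_nonneg (hc0 n k)]
    have := habc n k; have := ha0 n k; have := hb0 n k; have := hp1 n k; linarith
  -- summability of each piece
  have hpiece : ∀ q : ℕ → ℕ → ℝ, (∀ n k, |q n k| ≤ 1) →
      Summable (fun z : ℕ × ℕ => ‖q z.1 z.2 * x ^ z.1 * y ^ z.2‖) := by
    intro q hq
    apply Summable.of_nonneg_of_le (fun z => norm_nonneg _) (fun z => ?_) hgxy
    rw [Real.norm_eq_abs, abs_mul, abs_mul, abs_pow, abs_pow]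
    calc |q z.1 z.2| * |x| ^ z.1 * |y| ^ z.2 ≤ 1 * |x| ^ z.1 * |y| ^ z.2 := by
          gcongr ?_ * _ * _
          exact hq _ _
      _ = |x| ^ z.1 * |y| ^ z.2 := by ring
  have hAn := hpiece av ha1
  have hBn := hpiece bv hb1
  have hCn := hpiece cv hc1
  -- sum of the three pieces
  have hsplit : P = (∑' z : ℕ × ℕ, av z.1 z.2 * x ^ z.1 * y ^ z.2)
      + (∑' z : ℕ × ℕ, bv z.1 z.2 * x ^ z.1 * y ^ z.2)
      + (∑' z : ℕ × ℕ, cv z.1 z.2 * x ^ z.1 * y ^ z.2) := by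
    rw [hP_def]
    rw [tsum_congr (f := fun z : ℕ × ℕ => p z.1 z.2 * x ^ z.1 * y ^ z.2)
      (g := fun z : ℕ × ℕ => av z.1 z.2 * x ^ z.1 * y ^ z.2
        + bv z.1 z.2 * x ^ z.1 * y ^ z.2 + cv z.1 z.2 * x ^ z.1 * y ^ z.2)
      (fun z => by simp only [habc z.1 z.2]; ring)]
    rw [Summable.tsum_add (Summable.add hAn.of_norm hBn.of_norm) hCn.of_norm,
      Summable.tsum_add hAn.of_norm hBn.of_norm]
  -- piece C
  have hCsum : (∑' z : ℕ × ℕ, cv z.1 z.2 * x ^ z.1 * y ^ z.2) = TD := by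
    have hinj : Function.Injective (fun n : ℕ => ((n, 0) : ℕ × ℕ)) := by
      intro a b h
      exact ((Prod.mk.injEq _ _ _ _).mp h).1
    have hsupp : Function.support (fun z : ℕ × ℕ => cv z.1 z.2 * x ^ z.1 * y ^ z.2)
        ⊆ Set.range (fun n : ℕ => ((n, 0) : ℕ × ℕ)) := by
      apply Function.support_subset_iff'.2
      intro z hz
      have h2 : z.2 ≠ 0 := by
        intro h
        exact hz ⟨z.1, Prod.ext_iff.2 ⟨rfl, h.symm⟩⟩
      simp [hcv_def, h2]
    rw [← hinj.tsum_eq hsupp]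
    rw [tsum_congr (fun n : ℕ => by
      show cv n 0 * x ^ n * y ^ 0 = tailSeq d n * x ^ n
      simp [hcv_def])]
  -- piece B
  have hBsum : (∑' z : ℕ × ℕ, bv z.1 z.2 * x ^ z.1 * y ^ z.2) = D * TU * y := by
    have hTUyn : Summable (fun j : ℕ => ‖tailSeq u j * (x * y) ^ j * y‖) := by
      simpa only [norm_mul] using hTUn.mul_right ‖y‖
    have hinj : Function.Injective (fun w : ℕ × ℕ => ((w.1 + w.2, w.2 + 1) : ℕ × ℕ)) := by
      intro a b h
      simp only [Prod.mk.injEq] at h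
      exact Prod.ext_iff.2 ⟨by omega, by omega⟩
    have hsupp : Function.support (fun z : ℕ × ℕ => bv z.1 z.2 * x ^ z.1 * y ^ z.2)
        ⊆ Set.range (fun w : ℕ × ℕ => ((w.1 + w.2, w.2 + 1) : ℕ × ℕ)) := by
      apply Function.support_subset_iff'.2
      intro z hz
      have hbz : bv z.1 z.2 = 0 := by
        apply Finset.sum_eq_zero
        intro l hl
        simp only [Finset.mem_range] at hl
        by_cases h : z.2 = z.1 - l + 1
        · exfalso
          exact hz ⟨(l, z.1 - l), Prod.ext_iff.2 ⟨by simp; omega, by simp; omega⟩⟩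
        · simp [h]
      rw [hbz, zero_mul, zero_mul]
    rw [← hinj.tsum_eq hsupp]
    rw [tsum_congr (fun w : ℕ × ℕ => by
      show bv (w.1 + w.2) (w.2 + 1) * x ^ (w.1 + w.2) * y ^ (w.2 + 1)
        = (d w.1 * x ^ w.1) * (tailSeq u w.2 * (x * y) ^ w.2 * y)
      have hbval : bv (w.1 + w.2) (w.2 + 1) = d w.1 * tailSeq u w.2 := by
        simp only [hbv_def]
        rw [Finset.sum_eq_single_of_mem w.1 (by simp only [Finset.mem_range]; omega)]
        · have e : w.1 + w.2 - w.1 = w.2 := by omega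
          rw [e, if_pos rfl, mul_one]
        · intro l' hl' hne
          simp only [Finset.mem_range] at hl'
          have h : ¬ (w.2 + 1 = w.1 + w.2 - l' + 1) := by omega
          have h' : ¬ (w.2 = w.1 + w.2 - l') := by omega
          simp [h, h']
      rw [hbval]
      ring)]
    rw [← tsum_mul_tsum_of_summable_norm hDn hTUyn, tsum_mul_right, ← hD_def, ← hTU_def]
    ring
  -- piece A
  have hAsum : (∑' z : ℕ × ℕ, av z.1 z.2 * x ^ z.1 * y ^ z.2) = D * U * P := by
    set G : (ℕ × ℕ) × ℕ × ℕ → ℝ := fun ζ =>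
      if ζ.2.1 ≤ ζ.1.2 ∧ ζ.2.2 ≤ ζ.1.1 ∧ ζ.2.1 + ζ.2.2 ≤ ζ.1.1 then
        d ζ.2.2 * u ζ.2.1 * p (ζ.1.1 - (ζ.2.1 + ζ.2.2)) (ζ.1.2 - ζ.2.1) * x ^ ζ.1.1 * y ^ ζ.1.2
      else 0 with hG_def
    have hGnorm : Summable (fun ζ => ‖G ζ‖) := by
      have hW : Summable (fun ζ : (ℕ × ℕ) × ℕ × ℕ =>
          (|x| ^ ζ.1.1 * |y| ^ ζ.1.2) * (u ζ.2.1 * d ζ.2.2)) :=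
        hgxy.mul_of_nonneg (husum.summable.mul_of_nonneg hdsum.summable hupos hdpos)
          (fun z => mul_nonneg (pow_nonneg (abs_nonneg x) _) (pow_nonneg (abs_nonneg y) _))
          (fun z => mul_nonneg (hupos _) (hdpos _))
      apply Summable.of_nonneg_of_le (fun ζ => norm_nonneg _) (fun ζ => ?_) hW
      rcases ζ with ⟨⟨n, k⟩, m, l⟩
      simp only [hG_def]
      split
      · have base : 0 ≤ d l * u m * (|x| ^ n * |y| ^ k) :=
          mul_nonneg (mul_nonneg (hdpos l) (hupos m))
            (mul_nonneg (pow_nonneg (abs_nonneg x) n) (pow_nonneg (abs_nonneg y) k))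
        calc ‖d l * u m * p (n - (m + l)) (k - m) * x ^ n * y ^ k‖
            = d l * u m * (|x| ^ n * |y| ^ k) * |p (n - (m + l)) (k - m)| := by
              rw [Real.norm_eq_abs, abs_mul, abs_mul, abs_mul, abs_mul, abs_pow, abs_pow,
                abs_of_nonneg (hdpos l), abs_of_nonneg (hupos m)]
              ring
          _ ≤ d l * u m * (|x| ^ n * |y| ^ k) * 1 :=
              mul_le_mul_of_nonneg_left (hpabs _ _) base
          _ = |x| ^ n * |y| ^ k * (u m * d l) := by ring
      · rw [norm_zero]
        exact mul_nonneg
          (mul_nonneg (pow_nonneg (abs_nonneg x) n) (pow_nonneg (abs_nonneg y) k))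
          (mul_nonneg (hupos m) (hdpos l))
    have hG : Summable G := hGnorm.of_norm
    have hfin : ∀ z : ℕ × ℕ, av z.1 z.2 * x ^ z.1 * y ^ z.2 = ∑' w : ℕ × ℕ, G (z, w) := by
      rintro ⟨n, k⟩
      rw [tsum_eq_sum (s := Finset.range (k + 1) ×ˢ Finset.range (n + 1))
        (by
          intro w hw
          simp only [Finset.mem_product, Finset.mem_range, not_and_or, not_lt] at hw
          simp only [hG_def]
          rw [if_neg (by omega)])]
      rw [Finset.sum_product]
      show av n k * x ^ n * y ^ k = _
      simp only [hav_def]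
      rw [Finset.sum_mul, Finset.sum_mul]
      apply Finset.sum_congr rfl
      intro m hm
      rw [Finset.sum_mul, Finset.sum_mul]
      apply Finset.sum_congr rfl
      intro l hl
      simp only [Finset.mem_range] at hm hl
      simp only [hG_def]
      rw [ite_mul, ite_mul, zero_mul, zero_mul]
      by_cases hml : m + l ≤ n
      · rw [if_pos hml, if_pos ⟨by omega, by omega, hml⟩]
      · rw [if_neg hml, if_neg (by omega)]
    rw [tsum_congr hfin, ← Summable.tsum_prod' hG (fun b => hG.prod_factor b)]
    have hinj3 : Function.Injective (fun w : ℕ × ℕ × ℕ × ℕ =>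
        (((w.1 + w.2.1 + w.2.2.1, w.2.1 + w.2.2.2), (w.2.1, w.1)) : (ℕ × ℕ) × ℕ × ℕ)) := by
      rintro ⟨l, m, a, b⟩ ⟨l', m', a', b'⟩ h
      simp only [Prod.mk.injEq] at h ⊢
      omega
    have hsupp3 : Function.support G ⊆ Set.range (fun w : ℕ × ℕ × ℕ × ℕ =>
        (((w.1 + w.2.1 + w.2.2.1, w.2.1 + w.2.2.2), (w.2.1, w.1)) : (ℕ × ℕ) × ℕ × ℕ)) := by
      apply Function.support_subset_iff'.2
      rintro ⟨⟨n, k⟩, m, l⟩ hζ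
      simp only [hG_def]
      rw [if_neg]
      rintro ⟨h1, h2, h3⟩
      exact hζ ⟨(l, m, n - (m + l), k - m), by
        simp only [Prod.mk.injEq, and_true]
        omega⟩
    rw [← hinj3.tsum_eq hsupp3]
    rw [tsum_congr (fun w : ℕ × ℕ × ℕ × ℕ => by
      show G ((w.1 + w.2.1 + w.2.2.1, w.2.1 + w.2.2.2), (w.2.1, w.1))
        = (d w.1 * x ^ w.1) * ((u w.2.1 * (x * y) ^ w.2.1)
            * (p w.2.2.1 w.2.2.2 * x ^ w.2.2.1 * y ^ w.2.2.2))
      obtain ⟨l, m, a, b⟩ := w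
      simp only [hG_def]
      rw [if_pos ⟨by omega, by omega, by omega⟩]
      have e1 : l + m + a - (m + l) = a := by omega
      have e2 : m + b - m = b := by omega
      rw [e1, e2]
      ring)]
    have hΦn : Summable (fun v : ℕ × ℕ × ℕ =>
        ‖(u v.1 * (x * y) ^ v.1) * (p v.2.1 v.2.2 * x ^ v.2.1 * y ^ v.2.2)‖) :=
      Summable.mul_norm (f := fun n => u n * (x * y) ^ n)
        (g := fun z : ℕ × ℕ => p z.1 z.2 * x ^ z.1 * y ^ z.2) hUn hhn
    rw [← tsum_mul_tsum_of_summable_norm (f := fun n => d n * x ^ n)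
        (g := fun v : ℕ × ℕ × ℕ =>
          (u v.1 * (x * y) ^ v.1) * (p v.2.1 v.2.2 * x ^ v.2.1 * y ^ v.2.2)) hDn hΦn,
      ← tsum_mul_tsum_of_summable_norm (f := fun n => u n * (x * y) ^ n)
        (g := fun z : ℕ × ℕ => p z.1 z.2 * x ^ z.1 * y ^ z.2) hUn hhn,
      ← hD_def, ← hU_def, ← hP_def]
    ring
  have hkey : P = D * U * P + (D * TU * y + TD) := by
    conv_lhs => rw [hsplit, hCsum, hBsum, hAsum]
    ring
  -- non-vanishing denominator
  have hDb : |D| ≤ |x| := abs_tsum_le_abs hx hdpos hd0 hdsum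
  have hUb : |U| ≤ |x * y| := abs_tsum_le_abs hxy hupos hu0 husum
  have hne : 1 - D * U ≠ 0 := by
    have h1 : |D * U| < 1 := by
      rw [abs_mul]
      nlinarith [abs_nonneg D, abs_nonneg U, abs_nonneg x, abs_nonneg (x*y)]
    intro h
    have : D * U = 1 := by linarith [sub_eq_zero.mp h]
    rw [this] at h1
    simp at h1
  rw [eq_div_iff hne]
  nlinarith [hkey]
end

section
/- Let τ^u, τ^d be independent positive random variables, m ∈ (-1,1), and set τ^c = (1-m)τ^u - (1+m)τ^d. Suppose the tails 𝒯_u(t) = P(τ^u > t) and 𝒯_d(t) = P(τ^d > t) satisfy: 𝒯(t) := 𝒯_u(t) + 𝒯_d(t) is regularly varying of index -α for some α ∈ (0,2), α ≠ 2, and (𝒯_u(t) - 𝒯_d(t))/𝒯(t) → b ∈ [-1,1]. Then P(|τ^c| > t) ~ [ (1-m)^α (1+b)/2 + (1+m)^α (1-b)/2 ] · 𝒯(t) as t → ∞, and the tail balance of τ^c equals β = ((1-m)^α(1+b) - (1+m)^α(1-b)) / ((1-m)^α(1+b) + (1+m)^α(1-b)). -/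
open MeasureTheory Filter Set ProbabilityTheory
open scoped ENNReal ProbabilityTheory
lemma tail_tendsto_zero {Ω : Type*} [MeasureSpace Ω] [IsProbabilityMeasure (ℙ : Measure Ω)]
    (ξ : Ω → ℝ) (hm : Measurable ξ) :
    Tendsto (fun t : ℝ => (ℙ {ω | t < ξ ω}).toReal) atTop (nhds 0) := by
  set S : ℕ → Set Ω := fun n => {ω | (n : ℝ) < ξ ω} with hS
  have hmeas : ∀ n : ℕ, MeasurableSet (S n) := fun n => hm measurableSet_Ioi
  have hanti : Antitone S := by
    intro n k hnk ω hω
    exact lt_of_le_of_lt (show (n:ℝ) ≤ k by exact_mod_cast hnk) hω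
  have hempty : ⋂ n, S n = ∅ := by
    ext ω
    simp only [mem_iInter, mem_empty_iff_false, iff_false, not_forall]
    obtain ⟨n, hn⟩ := exists_nat_gt (ξ ω)
    exact ⟨n, by simp [hS, not_lt.2 hn.le]⟩
  have h1 : Tendsto (fun n => ℙ (S n)) atTop (nhds 0) := by
    have := tendsto_measure_iInter_atTop (μ := (ℙ : Measure Ω))
      (fun n => (hmeas n).nullMeasurableSet) hanti ⟨0, measure_ne_top _ _⟩
    rwa [hempty, measure_empty] at this
  have h2 : Tendsto (fun n : ℕ => (ℙ (S n)).toReal) atTop (nhds 0) := by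
    have := (ENNReal.tendsto_toReal (by simp)).comp h1
    exact this
  have h3 : Tendsto (fun t : ℝ => (ℙ (S ⌊t⌋₊)).toReal) atTop (nhds 0) :=
    h2.comp tendsto_nat_floor_atTop
  refine tendsto_of_tendsto_of_tendsto_of_le_of_le' tendsto_const_nhds h3 ?_ ?_
  · exact Eventually.of_forall fun t => ENNReal.toReal_nonneg
  · filter_upwards [eventually_ge_atTop (0:ℝ)] with t ht
    refine ENNReal.toReal_mono (measure_ne_top _ _) (measure_mono ?_)
    intro ω hω
    exact lt_of_le_of_lt (Nat.floor_le ht) hω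

lemma one_sided_tail {Ω : Type*} [MeasureSpace Ω] [IsProbabilityMeasure (ℙ : Measure Ω)]
    (σ ρ : Ω → ℝ) (hms : Measurable σ) (hmr : Measurable ρ)
    (hind : IndepFun σ ρ ℙ) (hposr : ∀ᵐ ω, 0 < ρ ω)
    (c d : ℝ) (hc : 0 < c) (hd : 0 < d)
    (α : ℝ) (T : ℝ → ℝ) (hT0 : ∀ᶠ t in atTop, 0 < T t)
    (hscale : ∀ k : ℝ, 0 < k → Tendsto (fun t => T (k * t) / T t) atTop (nhds (k ^ (-α))))
    (p : ℝ)
    (hσT : Tendsto (fun t => (ℙ {ω | t < σ ω}).toReal / T t) atTop (nhds p))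
    (hρ0 : Tendsto (fun t : ℝ => (ℙ {ω | t < ρ ω}).toReal) atTop (nhds 0)) :
    Tendsto (fun t => (ℙ {ω | t < c * σ ω - d * ρ ω}).toReal / T t) atTop
      (nhds (p * c ^ α)) := by
  set U : ℝ → ℝ := fun t => (ℙ {ω | t < σ ω}).toReal with hU
  set R : ℝ → ℝ := fun t => (ℙ {ω | t < ρ ω}).toReal with hR
  set F : ℝ → ℝ := fun t => (ℙ {ω | t < c * σ ω - d * ρ ω}).toReal with hF
  -- scaled limit of U(k t)/T t
  have hU_comp : ∀ k : ℝ, 0 < k →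
      Tendsto (fun t => U (k * t) / T t) atTop (nhds (p * k ^ (-α))) := by
    intro k hk
    have hkt : Tendsto (fun t : ℝ => k * t) atTop atTop :=
      Tendsto.const_mul_atTop hk tendsto_id
    have h1 : Tendsto (fun t => U (k * t) / T (k * t)) atTop (nhds p) := hσT.comp hkt
    have h2 := hscale k hk
    have h3 := h1.mul h2
    have heq : ∀ᶠ t in atTop,
        U (k * t) / T (k * t) * (T (k * t) / T t) = U (k * t) / T t := by
      filter_upwards [hkt.eventually hT0] with t ht
      rw [div_mul_div_comm, mul_comm (U (k*t)) (T (k*t)), mul_div_mul_left _ _ ht.ne']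
    exact Tendsto.congr' heq h3
  -- upper bound
  have hupper : ∀ t : ℝ, F t ≤ U ((1/c) * t) := by
    intro t
    refine ENNReal.toReal_mono (measure_ne_top _ _) (measure_mono_ae ?_)
    filter_upwards [hposr] with ω h0 hω
    have hdr : 0 < d * ρ ω := mul_pos hd h0
    have hω' : t < c * σ ω - d * ρ ω := hω
    have h1 : t < c * σ ω := by linarith
    show (1/c) * t < σ ω
    calc (1/c) * t < (1/c) * (c * σ ω) := by
          exact mul_lt_mul_of_pos_left h1 (by positivity)
      _ = σ ω := by field_simp
  -- lower bound
  have hlower : ∀ ε : ℝ, 0 < ε → ∀ t : ℝ,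
      U ((1 + ε)/c * t) * (1 - R (ε/d * t)) ≤ F t := by
    intro ε hε t
    set a := (1 + ε)/c * t
    set e := ε/d * t
    have hinter : ℙ (σ ⁻¹' Ioi a ∩ ρ ⁻¹' Iic e)
        = ℙ (σ ⁻¹' Ioi a) * ℙ (ρ ⁻¹' Iic e) :=
      hind.measure_inter_preimage_eq_mul (Ioi a) (Iic e) measurableSet_Ioi measurableSet_Iic
    have hsub : σ ⁻¹' Ioi a ∩ ρ ⁻¹' Iic e ⊆ {ω | t < c * σ ω - d * ρ ω} := by
      rintro ω ⟨h1, h2⟩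
      simp only [mem_preimage, mem_Ioi] at h1
      simp only [mem_preimage, mem_Iic] at h2
      have hca : c * a = (1 + ε) * t := by simp only [a]; field_simp
      have hde : d * e = ε * t := by simp only [e]; field_simp
      have h3 : c * a < c * σ ω := mul_lt_mul_of_pos_left h1 hc
      have h4 : d * ρ ω ≤ d * e := mul_le_mul_of_nonneg_left h2 hd.le
      simp only [mem_setOf_eq]
      linarith
    have hU' : (ℙ (σ ⁻¹' Ioi a)).toReal = U a := rfl
    have hR' : (ℙ (ρ ⁻¹' Iic e)).toReal = 1 - R e := by
      have hset : ρ ⁻¹' Iic e = {ω | e < ρ ω}ᶜ := by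
        ext ω; simp [not_lt]
      rw [hset, prob_compl_eq_one_sub (show MeasurableSet {ω | e < ρ ω} from hmr measurableSet_Ioi),
        ENNReal.toReal_sub_of_le prob_le_one (by simp)]
      simp [hR]
    calc U a * (1 - R e) = (ℙ (σ ⁻¹' Ioi a ∩ ρ ⁻¹' Iic e)).toReal := by
          rw [hinter, ENNReal.toReal_mul, hU', hR']
      _ ≤ F t := ENNReal.toReal_mono (measure_ne_top _ _) (measure_mono hsub)
  -- limit value rewrites
  have hcα : (1/c : ℝ) ^ (-α) = c ^ α := by
    rw [one_div, Real.inv_rpow hc.le, ← Real.rpow_neg hc.le, neg_neg]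
  set A := p * c ^ α with hA
  have hup_lim : Tendsto (fun t => U ((1/c) * t) / T t) atTop (nhds A) := by
    have h := hU_comp (1/c) (by positivity)
    rwa [hcα] at h
  rw [Metric.tendsto_nhds]
  intro δ hδ
  have hφcont : ContinuousAt (fun ε : ℝ => A * (1 + ε) ^ (-α)) 0 := by
    have h1 : ContinuousAt (fun ε : ℝ => (1 + ε)) 0 := by fun_prop
    have h2 : ContinuousAt (fun x : ℝ => x ^ (-α)) ((fun ε : ℝ => 1 + ε) 0) := by
      apply Real.continuousAt_rpow_const
      norm_num
    exact continuousAt_const.mul (h2.comp h1)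
  have hev : ∀ᶠ ε in nhds (0:ℝ), A - δ/2 < A * (1 + ε) ^ (-α) := by
    refine hφcont.eventually (p := fun x => A - δ/2 < x) ?_
    rw [show (fun ε : ℝ => A * (1 + ε) ^ (-α)) 0 = A by norm_num]
    exact lt_mem_nhds (by linarith)
  have hev' : ∀ᶠ ε in nhdsWithin (0:ℝ) (Set.Ioi 0),
      (A - δ/2 < A * (1 + ε) ^ (-α)) ∧ ε ∈ Set.Ioi (0:ℝ) :=
    (hev.filter_mono nhdsWithin_le_nhds).and eventually_mem_nhdsWithin
  obtain ⟨ε, hεgt, hεpos'⟩ := hev'.exists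
  have hεpos : 0 < ε := hεpos'
  have hlow_lim : Tendsto (fun t => U ((1+ε)/c * t) / T t * (1 - R (ε/d * t)))
      atTop (nhds (A * (1 + ε) ^ (-α))) := by
    have h1 := hU_comp ((1+ε)/c) (by positivity)
    have hval : p * ((1+ε)/c) ^ (-α) = A * (1+ε)^(-α) := by
      rw [Real.div_rpow (by positivity : (0:ℝ) ≤ 1 + ε) hc.le, Real.rpow_neg hc.le,
        hA]
      field_simp
    rw [hval] at h1
    have h2 : Tendsto (fun t => 1 - R (ε/d * t)) atTop (nhds 1) := by
      have h3 := hρ0.comp (Tendsto.const_mul_atTop (by positivity : (0:ℝ) < ε/d) tendsto_id)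
      have h4 := (tendsto_const_nhds (x := (1:ℝ)) (f := atTop)).sub h3
      simpa using h4
    simpa using h1.mul h2
  filter_upwards [hT0, hup_lim.eventually (gt_mem_nhds (show A < A + δ/2 by linarith)),
    hlow_lim.eventually (lt_mem_nhds hεgt)] with t hTt hup hlow
  have h1 : F t / T t ≤ U ((1/c) * t) / T t := by
    gcongr
    exact hupper t
  have h2 : U ((1+ε)/c * t) / T t * (1 - R (ε/d * t)) ≤ F t / T t := by
    rw [div_mul_eq_mul_div]
    gcongr
    exact hlower ε hεpos t
  rw [Real.dist_eq, abs_sub_lt_iff]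
  constructor <;> linarith


/-- `L` is slowly varying (at infinity). -/
def SlowlyVarying (L : ℝ → ℝ) : Prop :=
  ∀ c > (0:ℝ), Tendsto (fun t => L (c * t) / L t) atTop (nhds 1)

/-- Let τᵘ, τᵈ be independent positive random variables whose summed tail
`𝒯 = 𝒯_u + 𝒯_d` is regularly varying of index `-α`, `α ∈ (0,2)`, with tail balance
`(𝒯_u - 𝒯_d)/𝒯 → b ∈ [-1,1]`, and let `τᶜ = (1-m)τᵘ - (1+m)τᵈ`, `m ∈ (-1,1)`. Then
`P(|τᶜ| > t) ~ [(1-m)^α (1+b)/2 + (1+m)^α (1-b)/2] 𝒯(t)` and the tail balance of τᶜ is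
`β = ((1-m)^α(1+b) - (1+m)^α(1-b))/((1-m)^α(1+b) + (1+m)^α(1-b))`. -/
theorem stmt19 {Ω : Type*} [MeasureSpace Ω] [IsProbabilityMeasure (ℙ : Measure Ω)]
    (τu τd : Ω → ℝ) (hmu : Measurable τu) (hmd : Measurable τd)
    (hind : IndepFun τu τd ℙ)
    (hposu : ∀ᵐ ω, 0 < τu ω) (hposd : ∀ᵐ ω, 0 < τd ω)
    (m : ℝ) (hm : m ∈ Set.Ioo (-1:ℝ) 1)
    (α : ℝ) (hα : α ∈ Set.Ioo (0:ℝ) 2)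
    (b : ℝ) (hb : b ∈ Set.Icc (-1:ℝ) 1)
    (L : ℝ → ℝ) (hL : SlowlyVarying L)
    (hreg : ∀ᶠ t in atTop,
      (ℙ {ω | t < τu ω}).toReal + (ℙ {ω | t < τd ω}).toReal = L t * t ^ (-α))
    (hbal : Tendsto
        (fun t => ((ℙ {ω | t < τu ω}).toReal - (ℙ {ω | t < τd ω}).toReal)
            / ((ℙ {ω | t < τu ω}).toReal + (ℙ {ω | t < τd ω}).toReal))
        atTop (nhds b)) :
    Tendsto
        (fun t => (ℙ {ω | t < |(1 - m) * τu ω - (1 + m) * τd ω|}).toReal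
            / ((ℙ {ω | t < τu ω}).toReal + (ℙ {ω | t < τd ω}).toReal))
        atTop
        (nhds ((1 - m) ^ α * ((1 + b) / 2) + (1 + m) ^ α * ((1 - b) / 2))) ∧
    Tendsto
        (fun t => ((ℙ {ω | t < (1 - m) * τu ω - (1 + m) * τd ω}).toReal
              - (ℙ {ω | (1 - m) * τu ω - (1 + m) * τd ω < -t}).toReal)
            / ((ℙ {ω | t < (1 - m) * τu ω - (1 + m) * τd ω}).toReal
              + (ℙ {ω | (1 - m) * τu ω - (1 + m) * τd ω < -t}).toReal))
        atTop
        (nhds (((1 - m) ^ α * (1 + b) - (1 + m) ^ α * (1 - b))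
            / ((1 - m) ^ α * (1 + b) + (1 + m) ^ α * (1 - b)))) := by

  obtain ⟨hm1, hm2⟩ := hm
  have h1m : (0:ℝ) < 1 - m := by linarith
  have h1m' : (0:ℝ) < 1 + m := by linarith
  obtain ⟨hb1, hb2⟩ := hb
  obtain ⟨hα1, hα2⟩ := hα
  set Tu : ℝ → ℝ := fun t => (ℙ {ω | t < τu ω}).toReal with hTu_def
  set Td : ℝ → ℝ := fun t => (ℙ {ω | t < τd ω}).toReal with hTd_def
  set T : ℝ → ℝ := fun t => Tu t + Td t with hT_def
  -- L eventually nonzero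
  have hLne : ∀ᶠ t in atTop, L t ≠ 0 := by
    have h := hL 1 one_pos
    simp only [one_mul] at h
    filter_upwards [h.eventually (lt_mem_nhds (show (1:ℝ)/2 < 1 by norm_num))] with t ht
    intro h0
    rw [h0] at ht
    norm_num at ht
  -- T eventually positive
  have hT0 : ∀ᶠ t in atTop, 0 < T t := by
    filter_upwards [hreg, hLne, eventually_gt_atTop (0:ℝ)] with t hr hn ht
    have hTne : T t ≠ 0 := by
      rw [hT_def]
      simp only
      rw [hr]
      exact mul_ne_zero hn (Real.rpow_pos_of_pos ht _).ne'
    have hTnn : 0 ≤ T t := add_nonneg ENNReal.toReal_nonneg ENNReal.toReal_nonneg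
    exact lt_of_le_of_ne hTnn (Ne.symm hTne)
  -- scaling
  have hscale : ∀ k : ℝ, 0 < k → Tendsto (fun t => T (k * t) / T t) atTop (nhds (k ^ (-α))) := by
    intro k hk
    have hkt : Tendsto (fun t : ℝ => k * t) atTop atTop :=
      Tendsto.const_mul_atTop hk tendsto_id
    have heq : ∀ᶠ t in atTop, (L (k * t) / L t) * k ^ (-α) = T (k * t) / T t := by
      filter_upwards [hreg, hkt.eventually hreg, hLne, eventually_gt_atTop (0:ℝ)]
        with t hr hrk hn ht
      have htne : t ^ (-α) ≠ 0 := (Real.rpow_pos_of_pos ht _).ne'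
      have hmulr : (k * t) ^ (-α) = k ^ (-α) * t ^ (-α) := Real.mul_rpow hk.le ht.le
      rw [hT_def]
      simp only
      rw [hr, hrk, hmulr]
      field_simp
    have h1 := (hL k hk).mul_const (k ^ (-α))
    rw [one_mul] at h1
    exact Tendsto.congr' heq h1
  -- balance limits
  have hTuT : Tendsto (fun t => Tu t / T t) atTop (nhds ((1 + b)/2)) := by
    have h1 : Tendsto (fun t => (1 + (Tu t - Td t) / T t)/2) atTop (nhds ((1 + b)/2)) :=
      (tendsto_const_nhds.add hbal).div_const 2
    refine Tendsto.congr' ?_ h1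
    filter_upwards [hT0] with t ht
    have ht' : Tu t + Td t ≠ 0 := ht.ne'
    rw [hT_def]
    simp only
    field_simp
    ring
  have hTdT : Tendsto (fun t => Td t / T t) atTop (nhds ((1 - b)/2)) := by
    have h1 : Tendsto (fun t => (1 - (Tu t - Td t) / T t)/2) atTop (nhds ((1 - b)/2)) :=
      (tendsto_const_nhds.sub hbal).div_const 2
    refine Tendsto.congr' ?_ h1
    filter_upwards [hT0] with t ht
    have ht' : Tu t + Td t ≠ 0 := ht.ne'
    rw [hT_def]
    simp only
    field_simp
    ring
  -- one-sided results
  have hA := one_sided_tail τu τd hmu hmd hind hposd (1 - m) (1 + m) h1m h1m' α T hT0 hscale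
    ((1 + b)/2) hTuT (tail_tendsto_zero τd hmd)
  have hB := one_sided_tail τd τu hmd hmu hind.symm hposu (1 + m) (1 - m) h1m' h1m α T hT0 hscale
    ((1 - b)/2) hTdT (tail_tendsto_zero τu hmu)
  -- rewrite negative tail
  have hsetneg : ∀ t : ℝ, {ω | (1 - m) * τu ω - (1 + m) * τd ω < -t}
      = {ω | t < (1 + m) * τd ω - (1 - m) * τu ω} := by
    intro t
    ext ω
    simp only [mem_setOf_eq]
    constructor <;> intro h <;> linarith
  have hB' : Tendsto
      (fun t => (ℙ {ω | (1 - m) * τu ω - (1 + m) * τd ω < -t}).toReal / T t) atTop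
      (nhds ((1 - b)/2 * (1 + m) ^ α)) := by
    refine Tendsto.congr' ?_ hB
    filter_upwards with t
    rw [hsetneg t]
  -- measurability of τc
  have hmf : Measurable (fun ω => (1 - m) * τu ω - (1 + m) * τd ω) :=
    (hmu.const_mul _).sub (hmd.const_mul _)
  -- first claim
  have habs : ∀ t : ℝ, 0 ≤ t →
      (ℙ {ω | t < |(1 - m) * τu ω - (1 + m) * τd ω|}).toReal
        = (ℙ {ω | t < (1 - m) * τu ω - (1 + m) * τd ω}).toReal
          + (ℙ {ω | (1 - m) * τu ω - (1 + m) * τd ω < -t}).toReal := by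
    intro t ht
    have hset : {ω | t < |(1 - m) * τu ω - (1 + m) * τd ω|}
        = {ω | t < (1 - m) * τu ω - (1 + m) * τd ω}
          ∪ {ω | (1 - m) * τu ω - (1 + m) * τd ω < -t} := by
      ext ω
      simp only [mem_setOf_eq, mem_union, lt_abs, lt_neg]
    have hdisj : Disjoint {ω | t < (1 - m) * τu ω - (1 + m) * τd ω}
        {ω | (1 - m) * τu ω - (1 + m) * τd ω < -t} := by
      rw [Set.disjoint_left]
      intro ω hmem1 hmem2
      simp only [mem_setOf_eq] at hmem1 hmem2
      linarith
    rw [hset, measure_union hdisj (hmf measurableSet_Iio),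
      ENNReal.toReal_add (measure_ne_top _ _) (measure_ne_top _ _)]
  have claim1 : Tendsto
      (fun t => (ℙ {ω | t < |(1 - m) * τu ω - (1 + m) * τd ω|}).toReal / T t) atTop
      (nhds ((1 - m) ^ α * ((1 + b) / 2) + (1 + m) ^ α * ((1 - b) / 2))) := by
    have h1 := hA.add hB'
    have h2 : (1 + b)/2 * (1 - m) ^ α + (1 - b)/2 * (1 + m) ^ α
        = (1 - m) ^ α * ((1 + b) / 2) + (1 + m) ^ α * ((1 - b) / 2) := by ring
    rw [h2] at h1
    refine Tendsto.congr' ?_ h1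
    filter_upwards [eventually_ge_atTop (0:ℝ)] with t ht
    rw [habs t ht, add_div]
  refine ⟨claim1, ?_⟩
  -- second claim
  set A : ℝ := (1 + b)/2 * (1 - m) ^ α with hA_def
  set B : ℝ := (1 - b)/2 * (1 + m) ^ α with hB_def
  have hAnn : 0 ≤ A := by
    apply mul_nonneg (by linarith) (Real.rpow_pos_of_pos h1m _).le
  have hBnn : 0 ≤ B := by
    apply mul_nonneg (by linarith) (Real.rpow_pos_of_pos h1m' _).le
  have hABpos : 0 < A + B := by
    rcases lt_or_eq_of_le hb2 with h | h
    · have : 0 < B := mul_pos (by linarith) (Real.rpow_pos_of_pos h1m' _)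
      linarith
    · have : 0 < A := by
        rw [hA_def, h]
        exact mul_pos (by norm_num) (Real.rpow_pos_of_pos h1m _)
      linarith
  have hdiv : Tendsto
      (fun t => ((ℙ {ω | t < (1 - m) * τu ω - (1 + m) * τd ω}).toReal / T t
          - (ℙ {ω | (1 - m) * τu ω - (1 + m) * τd ω < -t}).toReal / T t)
        / ((ℙ {ω | t < (1 - m) * τu ω - (1 + m) * τd ω}).toReal / T t
          + (ℙ {ω | (1 - m) * τu ω - (1 + m) * τd ω < -t}).toReal / T t)) atTop
      (nhds ((A - B)/(A + B))) :=
    Tendsto.div (hA.sub hB') (hA.add hB') hABpos.ne'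
  have hval : (A - B)/(A + B)
      = ((1 - m) ^ α * (1 + b) - (1 + m) ^ α * (1 - b))
        / ((1 - m) ^ α * (1 + b) + (1 + m) ^ α * (1 - b)) := by
    have h2 : (1 - m) ^ α * (1 + b) + (1 + m) ^ α * (1 - b) = 2 * (A + B) := by
      rw [hA_def, hB_def]; ring
    have h1 : (1 - m) ^ α * (1 + b) - (1 + m) ^ α * (1 - b) = 2 * (A - B) := by
      rw [hA_def, hB_def]; ring
    rw [h1, h2, mul_div_mul_left _ _ (two_ne_zero)]
  rw [← hval]
  refine Tendsto.congr' ?_ hdiv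
  filter_upwards [hT0] with t ht
  rw [div_sub_div_same, ← add_div, div_div_div_comm, div_self ht.ne', div_one]
end
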